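/- For every non-negative integer m, the identity Γ(m+3/2)/Γ(m+k+1) = (√π / 2^(2m+1)) * Σ_{n=0}^{m} [(m+1)_n · ⟨m⟩_n · (m+1)_{k+n} · (k+m+2n+1)] / [n! · (k+n)! · (2m+2)_{k+n}] holds for all non-negative integers k, where (x)_n is the rising factorial and ⟨x⟩_n = x(x-1)···(x-n+1) is the falling factorial. -/

import Mathlib

/-- Rising factorial (Pochhammer symbol) `(x)_n`. -/
def risingFac (x : ℝ) (n : ℕ) : ℝ := ∏ i ∈ Finset.range n, (x + i)

/-- Falling factorial `⟨x⟩_n = x(x-1)⋯(x-n+1)`. -/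
def fallingFac (x : ℝ) (n : ℕ) : ℝ := ∏ i ∈ Finset.range n, (x - i)

noncomputable def Bs (m k n : ℕ) : ℝ :=
  (((m+n).factorial : ℝ) * ((m+k+n).factorial : ℝ) * ((m+k).factorial : ℝ)) /
  (((m-n).factorial : ℝ) * (n.factorial : ℝ) * ((k+n).factorial : ℝ) * ((2*m+k+n+1).factorial : ℝ))

noncomputable def Hf (m k n : ℕ) : ℝ := ((m:ℝ)+k+2*n+1) * Bs m k n

noncomputable def Gf (m k n : ℕ) : ℝ :=
  -(((n:ℝ) * ((n:ℝ)+k) * ((n:ℝ)+2*k+3*m+3) * ((m:ℝ)+k+2*n+1) * ((m-n).factorial : ℝ)) /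
    (((m+1-n).factorial : ℝ) * ((2*(n:ℝ)+k+m+1) * ((n:ℝ)+k+2*m+2)))) * Bs m k n

lemma hA (j k n : ℕ) : Hf (n+j+1) k n =
    ((3*(n:ℝ)+j+k+2) * ((2*(n:ℝ)+j+1)*(2*(n:ℝ)+j+k+1)*((n:ℝ)+j+k+1)) /
      (((j:ℝ)+1)*((3*(n:ℝ)+2*j+k+2)*(3*(n:ℝ)+2*j+k+3)))) * Bs (n+j) k n := by
  simp only [Hf, Bs]
  rw [show n + j + 1 - n = j + 1 from by omega,
      show n + j - n = j from by omega,
      show n + j + 1 + n = (n+j+n) + 1 from by omega,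
      show n + j + 1 + k + n = (n+j+k+n) + 1 from by omega,
      show n + j + 1 + k = (n+j+k) + 1 from by omega,
      show 2*(n+j+1)+k+n+1 = ((2*(n+j)+k+n+1) + 1) + 1 from by omega]
  simp only [Nat.factorial_succ]
  have h1 : ((n+j+n).factorial : ℝ) ≠ 0 := by positivity
  have h2 : ((n+j+k+n).factorial : ℝ) ≠ 0 := by positivity
  have h3 : ((n+j+k).factorial : ℝ) ≠ 0 := by positivity
  have h4 : (j.factorial : ℝ) ≠ 0 := by positivity
  have h5 : (n.factorial : ℝ) ≠ 0 := by positivity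
  have h6 : ((k+n).factorial : ℝ) ≠ 0 := by positivity
  have h7 : ((2*(n+j)+k+n+1).factorial : ℝ) ≠ 0 := by positivity
  push_cast
  field_simp
  ring

lemma hC (j k n : ℕ) : Gf (n+j) k (n+1) =
    -((((n:ℝ)+1)*(((n:ℝ)+1)+k)*(4*(n:ℝ)+3*j+2*k+4)*(3*(n:ℝ)+j+k+3)*((2*(n:ℝ)+j+1)*(2*(n:ℝ)+j+k+1))) /
      (((3*(n:ℝ)+j+k+3)*(3*(n:ℝ)+2*j+k+3))*(((n:ℝ)+1)*(((n:ℝ)+k+1)*(3*(n:ℝ)+2*j+k+2))))) *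
      Bs (n+j) k n := by
  simp only [Hf, Bs, Gf]
  rw [show n + j + 1 - (n+1) = j from by omega,
      show n + j - n = j from by omega,
      show n + j + (n+1) = (n+j+n) + 1 from by omega,
      show n + j + k + (n+1) = (n+j+k+n) + 1 from by omega,
      show k + (n+1) = (k+n) + 1 from by omega,
      show 2*(n+j)+k+(n+1)+1 = (2*(n+j)+k+n+1) + 1 from by omega]
  simp only [Nat.factorial_succ]
  have h1 : ((n+j+n).factorial : ℝ) ≠ 0 := by positivity
  have h2 : ((n+j+k+n).factorial : ℝ) ≠ 0 := by positivity
  have h3 : ((n+j+k).factorial : ℝ) ≠ 0 := by positivity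
  have h4 : (j.factorial : ℝ) ≠ 0 := by positivity
  have h5 : (n.factorial : ℝ) ≠ 0 := by positivity
  have h6 : ((k+n).factorial : ℝ) ≠ 0 := by positivity
  have h7 : ((2*(n+j)+k+n+1).factorial : ℝ) ≠ 0 := by positivity
  have h8 : ((n+j-(n+1)).factorial : ℝ) ≠ 0 := by positivity
  push_cast
  field_simp
  ring

lemma hD (j k n : ℕ) : Gf (n+j) k n =
    -(((n:ℝ)*((n:ℝ)+k)*(4*(n:ℝ)+3*j+2*k+3)*(3*(n:ℝ)+j+k+1)) /
      (((j:ℝ)+1)*((3*(n:ℝ)+j+k+1)*(3*(n:ℝ)+2*j+k+2)))) * Bs (n+j) k n := by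
  simp only [Gf, Bs]
  rw [show n + j - n = j from by omega, show n + j + 1 - n = j + 1 from by omega]
  simp only [Nat.factorial_succ]
  have h1 : ((n+j+n).factorial : ℝ) ≠ 0 := by positivity
  have h2 : ((n+j+k+n).factorial : ℝ) ≠ 0 := by positivity
  have h3 : ((n+j+k).factorial : ℝ) ≠ 0 := by positivity
  have h4 : (j.factorial : ℝ) ≠ 0 := by positivity
  have h5 : (n.factorial : ℝ) ≠ 0 := by positivity
  have h6 : ((k+n).factorial : ℝ) ≠ 0 := by positivity
  have h7 : ((2*(n+j)+k+n+1).factorial : ℝ) ≠ 0 := by positivity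
  push_cast
  field_simp
  ring

lemma local_id (j k n : ℕ) :
    Hf (n+j+1) k n - Hf (n+j) k n = Gf (n+j) k (n+1) - Gf (n+j) k n := by
  rw [hA, hC, hD, Hf]
  have h1 : ((j:ℝ)+1) ≠ 0 := by positivity
  have h2 : (3*(n:ℝ)+2*j+k+2) ≠ 0 := by positivity
  have h3 : (3*(n:ℝ)+2*j+k+3) ≠ 0 := by positivity
  have h4 : (3*(n:ℝ)+j+k+3) ≠ 0 := by positivity
  have h5 : (3*(n:ℝ)+j+k+1) ≠ 0 := by positivity
  have h6 : ((n:ℝ)+1) ≠ 0 := by positivity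
  have h7 : ((n:ℝ)+k+1) ≠ 0 := by positivity
  have hsc : ((3*(n:ℝ)+j+k+2) * ((2*(n:ℝ)+j+1)*(2*(n:ℝ)+j+k+1)*((n:ℝ)+j+k+1)) /
      (((j:ℝ)+1)*((3*(n:ℝ)+2*j+k+2)*(3*(n:ℝ)+2*j+k+3)))) - (((n:ℝ)+j)+k+2*n+1) =
      -((((n:ℝ)+1)*(((n:ℝ)+1)+k)*(4*(n:ℝ)+3*j+2*k+4)*(3*(n:ℝ)+j+k+3)*((2*(n:ℝ)+j+1)*(2*(n:ℝ)+j+k+1))) /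
      (((3*(n:ℝ)+j+k+3)*(3*(n:ℝ)+2*j+k+3))*(((n:ℝ)+1)*(((n:ℝ)+k+1)*(3*(n:ℝ)+2*j+k+2))))) -
      (-(((n:ℝ)*((n:ℝ)+k)*(4*(n:ℝ)+3*j+2*k+3)*(3*(n:ℝ)+j+k+1)) /
      (((j:ℝ)+1)*((3*(n:ℝ)+j+k+1)*(3*(n:ℝ)+2*j+k+2))))) := by
    field_simp
    ring
  have hcast : ((↑(n+j):ℝ)+k+2*n+1) = (((n:ℝ)+j)+k+2*n+1) := by push_cast; ring
  rw [hcast]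
  linear_combination (Bs (n+j) k n) * hsc

lemma Gf_zero (m k : ℕ) : Gf m k 0 = 0 := by
  simp [Gf]

lemma edge (m k : ℕ) : Hf (m+1) k (m+1) = - Gf m k (m+1) := by
  simp only [Hf, Gf, Bs]
  rw [show m + 1 - (m+1) = 0 from by omega,
      show m - (m+1) = 0 from by omega,
      show m + 1 + (m+1) = ((m+m)+1)+1 from by omega,
      show m + 1 + k + (m+1) = ((m+m+k)+1)+1 from by omega,
      show m + 1 + k = (m+k)+1 from by omega,
      show 2*(m+1)+k+(m+1)+1 = (((m+m+m+k+1)+1)+1)+1 from by omega,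
      show m + (m+1) = ((m+m)+1) from by omega,
      show m + k + (m+1) = ((m+m+k)+1) from by omega,
      show k + (m+1) = (k+m)+1 from by omega,
      show 2*m+k+(m+1)+1 = (m+m+m+k+1)+1 from by omega]
  simp only [Nat.factorial_succ, Nat.factorial_zero]
  have h1 : ((m+m).factorial : ℝ) ≠ 0 := by positivity
  have h2 : ((m+m+k).factorial : ℝ) ≠ 0 := by positivity
  have h3 : ((m+k).factorial : ℝ) ≠ 0 := by positivity
  have h4 : (m.factorial : ℝ) ≠ 0 := by positivity
  have h5 : ((k+m).factorial : ℝ) ≠ 0 := by positivity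
  have h6 : ((m+m+m+k+1).factorial : ℝ) ≠ 0 := by positivity
  push_cast
  field_simp
  ring

lemma Hf_base (k : ℕ) : Hf 0 k 0 = 1 := by
  simp only [Hf, Bs]
  rw [show (0:ℕ) + 0 = 0 from rfl, show 0 + k + 0 = k from by omega,
      show (0:ℕ) + k = k from by omega, show (0:ℕ) - 0 = 0 from rfl,
      show k + 0 = k from rfl]
  simp only [Nat.factorial_succ, Nat.factorial_zero]
  have h1 : (k.factorial : ℝ) ≠ 0 := by positivity
  have h2 : ((k:ℝ)+1) ≠ 0 := by positivity
  push_cast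
  field_simp
  ring

lemma sum_Hf (m k : ℕ) : ∑ n ∈ Finset.range (m+1), Hf m k n = 1 := by
  induction m with
  | zero => simpa using Hf_base k
  | succ m ih =>
    rw [Finset.sum_range_succ]
    have step : ∀ n ∈ Finset.range (m+1), Hf (m+1) k n = Hf m k n + (Gf m k (n+1) - Gf m k n) := by
      intro n hn
      have hnm : n ≤ m := Nat.lt_succ_iff.mp (Finset.mem_range.mp hn)
      obtain ⟨j, rfl⟩ : ∃ j, m = n + j := ⟨m - n, by omega⟩
      have h := local_id j k n
      linarith
    rw [Finset.sum_congr rfl step, Finset.sum_add_distrib, ih, Finset.sum_range_sub (Gf m k),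
        Gf_zero, edge]
    ring

lemma risingFac_eq (a n : ℕ) : risingFac ((a:ℝ)+1) n = ((a+n).factorial : ℝ) / (a.factorial : ℝ) := by
  have h : (a.factorial : ℝ) ≠ 0 := by positivity
  rw [eq_div_iff h]
  induction n with
  | zero => simp [risingFac]
  | succ n ih =>
    rw [risingFac, Finset.prod_range_succ, ← risingFac,
        show a+(n+1) = (a+n)+1 from by omega, Nat.factorial_succ]
    push_cast
    linear_combination ((a:ℝ)+1+n) * ih

lemma fallingFac_mul (a : ℕ) :
    ∀ n, n ≤ a → fallingFac (a:ℝ) n * ((a-n).factorial : ℝ) = (a.factorial : ℝ) := by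
  intro n
  induction n with
  | zero => intro _; simp [fallingFac]
  | succ n ih =>
    intro h
    have hn : n ≤ a := by omega
    rw [fallingFac, Finset.prod_range_succ, ← fallingFac]
    have key : ((a-n).factorial : ℝ) = ((a:ℝ) - n) * ((a-(n+1)).factorial : ℝ) := by
      rw [show a-n = (a-(n+1))+1 from by omega, Nat.factorial_succ]
      push_cast [Nat.cast_sub h]
      ring
    calc fallingFac (a:ℝ) n * ((a:ℝ) - n) * ((a-(n+1)).factorial : ℝ)
        = fallingFac (a:ℝ) n * (((a:ℝ) - n) * ((a-(n+1)).factorial : ℝ)) := by ring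
      _ = fallingFac (a:ℝ) n * ((a-n).factorial : ℝ) := by rw [key]
      _ = (a.factorial : ℝ) := ih hn

lemma fallingFac_eq (a n : ℕ) (h : n ≤ a) :
    fallingFac (a:ℝ) n = (a.factorial : ℝ) / (((a-n).factorial : ℝ)) := by
  have hnz : (((a-n).factorial : ℝ)) ≠ 0 := by positivity
  rw [eq_div_iff hnz]
  exact fallingFac_mul a n h

lemma gamma_half (m : ℕ) : Real.Gamma ((m:ℝ) + 3/2) =
    Real.sqrt Real.pi * ((2*m+1).factorial : ℝ) / (2^(2*m+1) * (m.factorial : ℝ)) := by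
  induction m with
  | zero =>
    rw [show ((0:ℕ):ℝ) + 3/2 = 1/2 + 1 by norm_num, Real.Gamma_add_one (by norm_num),
        Real.Gamma_one_half_eq]
    norm_num [Nat.factorial]
    ring
  | succ m ih =>
    have h : ((m:ℝ)+3/2) ≠ 0 := by positivity
    rw [show ((m+1:ℕ):ℝ) + 3/2 = ((m:ℝ)+3/2) + 1 by push_cast; ring, Real.Gamma_add_one h, ih,
        show 2*(m+1)+1 = ((2*m+1)+1)+1 from by omega]
    simp only [Nat.factorial_succ]
    have h1 : (m.factorial : ℝ) ≠ 0 := by positivity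
    have h2 : ((2:ℝ))^(2*m+1) ≠ 0 := by positivity
    push_cast
    rw [pow_succ, pow_succ]
    field_simp
    ring

theorem gamma_quotient_half_integer (m k : ℕ) :
    Real.Gamma ((m : ℝ) + 3 / 2) / Real.Gamma ((m : ℝ) + k + 1) =
      Real.sqrt Real.pi / 2 ^ (2 * m + 1) *
        ∑ n ∈ Finset.range (m + 1),
          risingFac ((m : ℝ) + 1) n * fallingFac (m : ℝ) n * risingFac ((m : ℝ) + 1) (k + n)
              * ((k : ℝ) + m + 2 * n + 1) /
            ((n.factorial : ℝ) * ((k + n).factorial : ℝ) * risingFac (2 * (m : ℝ) + 2) (k + n)) := by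
  have hG2 : Real.Gamma ((m:ℝ) + k + 1) = ((m+k).factorial : ℝ) := by
    rw [show (m:ℝ)+k+1 = ((m+k:ℕ):ℝ)+1 by push_cast; ring, Real.Gamma_nat_eq_factorial]
  have hterm : ∀ n ∈ Finset.range (m+1),
      risingFac ((m : ℝ) + 1) n * fallingFac (m : ℝ) n * risingFac ((m : ℝ) + 1) (k + n)
          * ((k : ℝ) + m + 2 * n + 1) /
        ((n.factorial : ℝ) * ((k + n).factorial : ℝ) * risingFac (2 * (m : ℝ) + 2) (k + n)) =
      ((2*m+1).factorial : ℝ) / ((m.factorial : ℝ) * ((m+k).factorial : ℝ)) * Hf m k n := by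
    intro n hn
    have hnm : n ≤ m := Nat.lt_succ_iff.mp (Finset.mem_range.mp hn)
    rw [risingFac_eq m n, risingFac_eq m (k+n), fallingFac_eq m n hnm,
        show 2*(m:ℝ)+2 = ((2*m+1:ℕ):ℝ)+1 by push_cast; ring, risingFac_eq (2*m+1) (k+n),
        show m+(k+n) = m+k+n from by omega, show 2*m+1+(k+n) = 2*m+k+n+1 from by omega]
    simp only [Hf, Bs]
    have h1 : (m.factorial : ℝ) ≠ 0 := by positivity
    have h2 : ((m-n).factorial : ℝ) ≠ 0 := by positivity
    have h3 : (n.factorial : ℝ) ≠ 0 := by positivity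
    have h4 : ((k+n).factorial : ℝ) ≠ 0 := by positivity
    have h5 : ((2*m+1).factorial : ℝ) ≠ 0 := by positivity
    have h6 : ((2*m+k+n+1).factorial : ℝ) ≠ 0 := by positivity
    have h7 : ((m+k).factorial : ℝ) ≠ 0 := by positivity
    have h8 : ((m+n).factorial : ℝ) ≠ 0 := by positivity
    have h9 : ((m+k+n).factorial : ℝ) ≠ 0 := by positivity
    field_simp
    ring
  rw [hG2, gamma_half, Finset.sum_congr rfl hterm, ← Finset.mul_sum, sum_Hf, mul_one]
  ring
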